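/- Let U be a supertropical monoid whose ghost ideal eU equals M = {cᵏ : k ∈ ℕ} ∪ {0} (with cᵏ·cˡ = c^{k+l}, e = c⁰, all cᵏ distinct, 0 < e < c < c² < ⋯), and assume every element of 𝒯(U) is a (possibly empty) product of elements of 𝒯_c(U) := {x ∈ 𝒯(U) : e·x = c}. Then: (a) 𝒯_c(U) is exactly the set of irreducible elements of U; (b) 𝒯(U) is finite if and only if 𝒯_c(U) is finite and for every x ∈ 𝒯_c(U) there exists d ∈ ℕ with x^d ∈ 𝒯(U) and x^{d+1} ∈ eU; and in that case, writing 𝒯_c(U) = {x₁, …, x_m} and letting d_k be minimal with x_k^{d_k+1} ∈ eU, every tangible element is a product ∏ x_k^{α_k} with 0 ≤ α_k ≤ d_k, so |𝒯(U)| ≤ ∏_{k=1}^{m} (d_k + 1). -/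
import Mathlib


/-- A supertropical monoid structure on a commutative monoid `U`: an absorbing
element `zero`, a distinguished idempotent `e` with `e * x = 0 → x = 0`, and a
total order on the ghost ideal `eU = {e * y : y ∈ U}` compatible with
multiplication and with least element `zero`. -/
structure SupertropicalStr (U : Type) [CommMonoid U] where
  zero : U
  e : U
  zero_mul : ∀ x : U, zero * x = zero
  e_idem : e * e = e
  e_mul_eq_zero : ∀ x : U, e * x = zero → x = zero
  le : U → U → Prop
  le_refl : ∀ a : U, (∃ y, a = e * y) → le a a
  le_trans : ∀ a b c : U, (∃ y, a = e * y) → (∃ y, b = e * y) → (∃ y, c = e * y) →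
    le a b → le b c → le a c
  le_antisymm : ∀ a b : U, (∃ y, a = e * y) → (∃ y, b = e * y) → le a b → le b a → a = b
  le_total : ∀ a b : U, (∃ y, a = e * y) → (∃ y, b = e * y) → le a b ∨ le b a
  mul_le_mul : ∀ a b d : U, (∃ y, a = e * y) → (∃ y, b = e * y) → (∃ y, d = e * y) →
    le a b → le (a * d) (b * d)
  zero_le : ∀ a : U, (∃ y, a = e * y) → le zero a

namespace SupertropicalStr

variable {U : Type} [CommMonoid U] (S : SupertropicalStr U)

/-- `x` is a ghost element, i.e. `x ∈ eU`. -/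
def Ghost (x : U) : Prop := ∃ y, x = S.e * y

/-- `x` is tangible, i.e. `x ∈ 𝒯(U) = U ∖ eU`. -/
def Tangible (x : U) : Prop := ¬ S.Ghost x

/-- `a` and `b` are of the same kind: both tangible, both nonzero ghosts, or both zero. -/
def SameKind (a b : U) : Prop :=
  (S.Tangible a ∧ S.Tangible b) ∨
  (S.Ghost a ∧ a ≠ S.zero ∧ S.Ghost b ∧ b ≠ S.zero) ∨
  (a = S.zero ∧ b = S.zero)

/-- Two tangibles have the same fate if they have the same ghost companion and all
products with tangibles are of the same kind. -/
def SameFate (x₁ x₂ : U) : Prop :=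
  S.e * x₁ = S.e * x₂ ∧ ∀ u : U, S.Tangible u → S.SameKind (x₁ * u) (x₂ * u)

/-- `U` has fate distinction: distinct tangibles have different fates. -/
def FateDistinction : Prop :=
  ∀ x₁ x₂ : U, S.Tangible x₁ → S.Tangible x₂ → S.SameFate x₁ x₂ → x₁ = x₂

/-- An MFCE-relation: a multiplicative, fiber conserving equivalence relation. -/
def IsMFCE (E : U → U → Prop) : Prop :=
  Equivalence E ∧ (∀ x y z : U, E x y → E (x * z) (y * z)) ∧
  (∀ x y : U, E x y → S.e * x = S.e * y)

end SupertropicalStr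

/-- If the ghost ideal of `U` is `M = {e, c, c², …} ∪ {0}` and every tangible is a
product of elements of `𝒯_c(U)`, then: (a) `𝒯_c(U)` is exactly the set of
irreducibles; (b) `𝒯(U)` is finite iff `𝒯_c(U)` is finite and each `x ∈ 𝒯_c(U)`
has a power `x^d` tangible with `x^(d+1)` ghost; and in that case every tangible
is `∏ x^(α x)` with `α x ≤ d x`, so `|𝒯(U)| ≤ ∏ (d x + 1)`. -/
theorem stmt9 {U : Type} [CommMonoid U] (S : SupertropicalStr U) (c : U)
    (hM : ∀ x : U, S.Ghost x ↔ (x = S.zero ∨ ∃ k : ℕ, x = S.e * c ^ k))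
    (hinj : ∀ k l : ℕ, k ≠ l → S.e * c ^ k ≠ S.e * c ^ l)
    (hne : ∀ k : ℕ, S.e * c ^ k ≠ S.zero)
    (hlt : ∀ k l : ℕ, k < l → S.le (S.e * c ^ k) (S.e * c ^ l))
    (hfact : ∀ x : U, S.Tangible x →
      ∃ l : List U, (∀ y ∈ l, S.Tangible y ∧ S.e * y = S.e * c) ∧ x = l.prod) :
    (∀ x : U,
      (S.Tangible x ∧ x ≠ 1 ∧
        ¬ ∃ u v : U, S.Tangible u ∧ S.Tangible v ∧ u ≠ 1 ∧ v ≠ 1 ∧ x = u * v)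
      ↔ (S.Tangible x ∧ S.e * x = S.e * c)) ∧
    ({x : U | S.Tangible x}.Finite ↔
      ({x : U | S.Tangible x ∧ S.e * x = S.e * c}.Finite ∧
       ∀ x : U, S.Tangible x → S.e * x = S.e * c →
         ∃ d : ℕ, S.Tangible (x ^ d) ∧ S.Ghost (x ^ (d + 1)))) ∧
    ({x : U | S.Tangible x}.Finite →
      ∀ (Tc : Finset U) (d : U → ℕ),
        (∀ x : U, x ∈ Tc ↔ (S.Tangible x ∧ S.e * x = S.e * c)) →
        (∀ x ∈ Tc, S.Tangible (x ^ d x) ∧ S.Ghost (x ^ (d x + 1))) →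
        (∀ z : U, S.Tangible z →
          ∃ α : U → ℕ, (∀ x ∈ Tc, α x ≤ d x) ∧ z = ∏ x ∈ Tc, x ^ α x) ∧
        {x : U | S.Tangible x}.ncard ≤ ∏ x ∈ Tc, (d x + 1)) := by
  classical
  -- basic facts
  have hgmul : ∀ x y : U, S.Ghost x → S.Ghost (x * y) := by
    rintro x y ⟨z, rfl⟩; exact ⟨z * y, by rw [mul_assoc]⟩
  have hsplit : ∀ a b : U, S.Tangible (a * b) → S.Tangible a ∧ S.Tangible b := by
    intro a b h
    constructor
    · exact fun hg => h (hgmul _ _ hg)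
    · exact fun hg => h (by rw [mul_comm]; exact hgmul _ _ hg)
  have hmul2 : ∀ u v : U, ∀ k l : ℕ, S.e * u = S.e * c ^ k → S.e * v = S.e * c ^ l →
      S.e * (u * v) = S.e * c ^ (k + l) := by
    intro u v k l hu hv
    calc S.e * (u * v) = (S.e * S.e) * (u * v) := by rw [S.e_idem]
      _ = (S.e * u) * (S.e * v) := mul_mul_mul_comm ..
      _ = (S.e * c ^ k) * (S.e * c ^ l) := by rw [hu, hv]
      _ = (S.e * S.e) * (c ^ k * c ^ l) := (mul_mul_mul_comm ..).symm
      _ = S.e * c ^ (k + l) := by rw [S.e_idem, pow_add]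
  have hlistprod : ∀ l : List U, (∀ y ∈ l, S.e * y = S.e * c) →
      S.e * l.prod = S.e * c ^ l.length := by
    intro l
    induction l with
    | nil => intro _; simp
    | cons y t ih =>
      intro h
      have hy : S.e * y = S.e * c ^ 1 := by
        rw [pow_one]; exact h y (List.mem_cons_self ..)
      have ht := ih (fun z hz => h z (List.mem_cons_of_mem _ hz))
      rw [List.prod_cons, List.length_cons]
      rw [hmul2 y t.prod 1 t.length hy ht, Nat.add_comm]
  have hdeg : ∀ x : U, S.Tangible x → ∃ k : ℕ, S.e * x = S.e * c ^ k := by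
    intro x hx
    obtain ⟨l, hl, rfl⟩ := hfact x hx
    exact ⟨l.length, hlistprod l (fun y hy => (hl y hy).2)⟩
  have hone : ∀ x : U, S.Tangible x → S.e * x = S.e * c ^ 0 → x = 1 := by
    intro x hx hex
    obtain ⟨l, hl, rfl⟩ := hfact x hx
    have h2 := hlistprod l fun y hy => (hl y hy).2
    have hlen : l.length = 0 := by
      by_contra h
      exact hinj _ 0 h (h2.symm.trans hex)
    rw [List.length_eq_zero_iff] at hlen
    rw [hlen, List.prod_nil]
  have hpow : ∀ x : U, S.e * x = S.e * c → ∀ k : ℕ, S.e * x ^ k = S.e * c ^ k := by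
    intro x hx k
    induction k with
    | zero => simp
    | succ n ih =>
      rw [pow_succ, hmul2 (x ^ n) x n 1 ih (by rw [pow_one]; exact hx)]
  -- the key sharing lemma: factorization into bounded exponent products
  have key : ∀ (Tc : Finset U) (d : U → ℕ),
      (∀ x : U, x ∈ Tc ↔ (S.Tangible x ∧ S.e * x = S.e * c)) →
      (∀ x ∈ Tc, S.Tangible (x ^ d x) ∧ S.Ghost (x ^ (d x + 1))) →
      ∀ z : U, S.Tangible z →
        ∃ α : U → ℕ, (∀ x ∈ Tc, α x ≤ d x) ∧ z = ∏ x ∈ Tc, x ^ α x := by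
    intro Tc d hTc hd z hz
    obtain ⟨l, hl, rfl⟩ := hfact z hz
    have hsub : l.toFinset ⊆ Tc := by
      intro y hy
      rw [List.mem_toFinset] at hy
      exact (hTc y).2 (hl y hy)
    refine ⟨fun x => l.count x, ?_, Finset.prod_list_count_of_subset l Tc hsub⟩
    intro x hx
    by_contra hgt
    push_neg at hgt
    -- then x ^ (l.count x) is a ghost, so l.prod is a ghost
    have hghost : S.Ghost (x ^ l.count x) := by
      obtain ⟨r, hr⟩ : ∃ r, l.count x = (d x + 1) + r := ⟨l.count x - (d x + 1), by omega⟩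
      rw [hr, pow_add]
      exact hgmul _ _ (hd x hx).2
    have : l.prod = x ^ l.count x * ∏ y ∈ Tc.erase x, y ^ l.count y := by
      rw [Finset.mul_prod_erase Tc (fun y => y ^ l.count y) hx]
      exact Finset.prod_list_count_of_subset l Tc hsub
    exact hz (this ▸ hgmul _ _ hghost)
  -- key2: the image finset covering all tangibles
  have key2 : ∀ (Tc : Finset U) (d : U → ℕ),
      (∀ x : U, x ∈ Tc ↔ (S.Tangible x ∧ S.e * x = S.e * c)) →
      (∀ x ∈ Tc, S.Tangible (x ^ d x) ∧ S.Ghost (x ^ (d x + 1))) →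
      {x : U | S.Tangible x} ⊆
        ↑((Tc.pi fun x => Finset.range (d x + 1)).image
            fun f => ∏ x ∈ Tc.attach, x.1 ^ f x.1 x.2) := by
    intro Tc d hTc hd z hz
    obtain ⟨α, hα1, hα2⟩ := key Tc d hTc hd z hz
    simp only [Finset.coe_image, Set.mem_image, Finset.mem_coe, Finset.mem_pi]
    refine ⟨fun x _ => α x, fun x hx => Finset.mem_range.2 (Nat.lt_succ_of_le (hα1 x hx)), ?_⟩
    rw [Finset.prod_attach Tc (fun x => x ^ α x)]
    exact hα2.symm
  refine ⟨?_, ?_, ?_⟩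
  -- Part (a)
  · intro x
    constructor
    · rintro ⟨hx, hx1, hirr⟩
      refine ⟨hx, ?_⟩
      obtain ⟨l, hl, rfl⟩ := hfact x hx
      match l, hl, hx, hx1, hirr with
      | [], hl, hx, hx1, hirr => exact absurd List.prod_nil hx1
      | [y], hl, hx, hx1, hirr =>
        rw [List.prod_cons, List.prod_nil, mul_one]
        exact (hl y (by simp)).2
      | y :: z :: t, hl, hx, hx1, hirr =>
        exfalso
        apply hirr
        rw [List.prod_cons]
        refine ⟨y, (z :: t).prod, (hl y (by simp)).1,
          (hsplit _ _ hx).2, ?_, ?_, rfl⟩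
        · intro h1
          have := (hl y (by simp)).2
          rw [h1, mul_one] at this
          exact hinj 0 1 (by norm_num) (by simpa using this)
        · intro h1
          have hp := hlistprod (z :: t) (fun w hw => (hl w (List.mem_cons_of_mem _ hw)).2)
          rw [h1, mul_one] at hp
          exact hinj 0 (z :: t).length (by simp) (by simpa using hp)
    · rintro ⟨hx, hxc⟩
      refine ⟨hx, ?_, ?_⟩
      · intro h1
        rw [h1, mul_one] at hxc
        exact hinj 0 1 (by norm_num) (by simpa using hxc)
      · rintro ⟨u, v, hu, hv, hu1, hv1, rfl⟩
        obtain ⟨k, hk⟩ := hdeg u hu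
        obtain ⟨m, hm⟩ := hdeg v hv
        have hk0 : k ≠ 0 := fun h => hu1 (hone u hu (h ▸ hk))
        have hm0 : m ≠ 0 := fun h => hv1 (hone v hv (h ▸ hm))
        have := hmul2 u v k m hk hm
        rw [hxc] at this
        exact hinj 1 (k + m) (by omega) (by rw [← this, pow_one])
  -- Part (b)
  · constructor
    · intro hfin
      constructor
      · exact hfin.subset (fun x hx => hx.1)
      · intro x hx hxc
        have hone_t : S.Tangible 1 := by
          intro hg
          exact hx (by rw [← mul_one x, mul_comm]; exact hgmul _ _ hg)
        have hex : ∃ k : ℕ, S.Ghost (x ^ (k + 1)) := by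
          by_contra hc
          push_neg at hc
          have hinjf : Function.Injective (fun k : ℕ => x ^ (k + 1)) := by
            intro a b hab
            by_contra hab'
            apply hinj (a + 1) (b + 1) (by omega)
            rw [← hpow x hxc, ← hpow x hxc]
            simp only at hab
            rw [hab]
          exact (Set.infinite_of_injective_forall_mem hinjf
            (fun k => hc k)) hfin
        refine ⟨Nat.find hex, ?_, Nat.find_spec hex⟩
        cases h : Nat.find hex with
        | zero => simpa using hone_t
        | succ m =>
          have := Nat.find_min hex (m := m) (by omega)
          exact this
    · rintro ⟨hTcfin, hd⟩
      choose! dd hdd1 hdd2 using hd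
      set Tc : Finset U := hTcfin.toFinset with hTcdef
      have hTc : ∀ x : U, x ∈ Tc ↔ (S.Tangible x ∧ S.e * x = S.e * c) := by
        intro x; rw [hTcdef, Set.Finite.mem_toFinset]; rfl
      have hd' : ∀ x ∈ Tc, S.Tangible (x ^ dd x) ∧ S.Ghost (x ^ (dd x + 1)) := by
        intro x hx
        obtain ⟨h1, h2⟩ := (hTc x).1 hx
        exact ⟨hdd1 x h1 h2, hdd2 x h1 h2⟩
      exact Set.Finite.subset (Finset.finite_toSet _) (key2 Tc dd hTc hd')
  -- Part (c)
  · intro hfin Tc d hTc hd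
    refine ⟨key Tc d hTc hd, ?_⟩
    calc {x : U | S.Tangible x}.ncard
        ≤ (((Tc.pi fun x => Finset.range (d x + 1)).image
            fun f => ∏ x ∈ Tc.attach, x.1 ^ f x.1 x.2) : Finset U).card := by
          rw [← Set.ncard_coe_finset]
          exact Set.ncard_le_ncard (key2 Tc d hTc hd) (Finset.finite_toSet _)
      _ ≤ (Tc.pi fun x => Finset.range (d x + 1)).card := Finset.card_image_le
      _ = ∏ x ∈ Tc, (d x + 1) := by
          rw [Finset.card_pi]
          exact Finset.prod_congr rfl (fun x _ => Finset.card_range _)
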